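/- Let (b,θ,q,m) be a magnetic graph over X and p ∈ [1,∞). Then for every finitely supported function f : X → ℂ: ∫₀^∞ ( ι_{1,θ}(Ω_t(|f|^p)) + (1/2) Σ_{(x,y)∈∂Ω_t(|f|^p)} b(x,y) ) dt ≤ (√(p²+1)/2) · Σ_{x,y∈X} b(x,y) |f(x) − e^{iθ(x,y)} f(y)| · ((|f(x)|^p + |f(y)|^p)/2)^{(p−1)/p}, where for g : X → [0,∞) and t ≥ 0, Ω_t(g) = {x ∈ X : g(x) > t}. -/

import Mathlib

open Complex MeasureTheory
open scoped Classical

noncomputable section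

variable {X : Type*}

/-- The structural hypotheses of a magnetic graph `(b, θ, q, m)` over `X`:
`b` is nonnegative, symmetric, has zero diagonal and summable rows; the
magnetic potential `θ` is antisymmetric modulo `2π`; the measure `m` is positive. -/
def IsMagneticGraph (b θ : X → X → ℝ) (m : X → ℝ) : Prop :=
  (∀ x y, 0 ≤ b x y) ∧ (∀ x y, b x y = b y x) ∧ (∀ x, b x x = 0) ∧
  (∀ x, Summable fun y => b x y) ∧
  (∀ x y, ∃ k : ℤ, θ x y + θ y x = 2 * Real.pi * k) ∧
  (∀ x, 0 < m x)

/-- The `p`-frustration index `ι_{p,θ}(W)` of a finite set `W`. -/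
def frust (b θ : X → X → ℝ) (p : ℝ) (W : Finset X) : ℝ :=
  sInf {r : ℝ | ∃ τ : X → ℂ, (∀ x ∈ W, ‖τ x‖ = 1) ∧
    r = (1 / 2) * ∑ x ∈ W, ∑ y ∈ W,
      b x y * ‖τ x - Complex.exp ((θ x y : ℂ) * Complex.I) * τ y‖ ^ p}

/-- The measure `b(∂W)` of the boundary `∂W = (W×(X∖W)) ∪ ((X∖W)×W)`. -/
def bBoundary (b : X → X → ℝ) (W : Finset X) : ℝ :=
  (∑ x ∈ W, ∑' y : {y : X // y ∉ W}, b x ↑y) +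
  (∑ y ∈ W, ∑' x : {x : X // x ∉ W}, b ↑x y)

/-- `(a,k)_p`-magnetic-sparseness. -/
def MagSparse (b θ : X → X → ℝ) (q m : X → ℝ) (p a k : ℝ) : Prop :=
  ∀ W : Finset X,
    (∑ x ∈ W, ∑ y ∈ W, b x y) ≤
      (1 + a) * frust b θ p W +
      a * ((1 / 2) * bBoundary b W + ∑ x ∈ W, max (q x) 0 * m x) +
      k * ∑ x ∈ W, m x

/-- The energy functional `Q_{p,θ}` on finitely supported functions. -/
def Qform (b θ : X → X → ℝ) (q m : X → ℝ) (p : ℝ) (f : X → ℂ) : ℝ :=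
  (1 / 2) * ∑' x, ∑' y, b x y * ‖f x - Complex.exp ((θ x y : ℂ) * Complex.I) * f y‖ ^ p +
  ∑' x, q x * ‖f x‖ ^ p * m x

/-- The weighted vertex degree `Deg(x) = (1/m(x)) Σ_y b(x,y) + q(x)`. -/
def Degf (b : X → X → ℝ) (q m : X → ℝ) (x : X) : ℝ :=
  (1 / m x) * ∑' y, b x y + q x

/-- The pairing `⟨Deg, |f|^p⟩ = Σ_x Deg(x) |f(x)|^p m(x)`. -/
def degPair (b : X → X → ℝ) (q m : X → ℝ) (p : ℝ) (f : X → ℂ) : ℝ :=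
  ∑' x, Degf b q m x * ‖f x‖ ^ p * m x

/-- The `p`-norm to the `p`: `‖f‖_p^p = Σ_x |f(x)|^p m(x)`. -/
def pNorm (m : X → ℝ) (p : ℝ) (f : X → ℂ) : ℝ :=
  ∑' x, ‖f x‖ ^ p * m x

/-- `q ∈ K_α^{p,θ}` with constant `C`: the negative part of `q` is form bounded. -/
def InKClass (b θ : X → X → ℝ) (q m : X → ℝ) (p α C : ℝ) : Prop :=
  ∀ f : X → ℂ, (Function.support f).Finite →
    (∑' x, max (-q x) 0 * ‖f x‖ ^ p * m x) ≤
      α * Qform b θ (fun x => max (q x) 0) m p f + C * pNorm m p f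



private lemma midpoint_rpow {r t u : ℝ} (hr : r ≤ 0) (ht : 0 < t) (hu : 0 < u) :
    2 * (((t + u) / 2) ^ r) ≤ t ^ r + u ^ r := by
  have e1 : t ^ (r/2) * t ^ (r/2) = t ^ r := by
    rw [← Real.rpow_add ht]; ring_nf
  have e2 : u ^ (r/2) * u ^ (r/2) = u ^ r := by
    rw [← Real.rpow_add hu]; ring_nf
  have h1 : t ^ (r/2) * u ^ (r/2) = (t * u) ^ (r/2) := (Real.mul_rpow ht.le hu.le).symm
  have h2 : 2 * (t ^ (r/2) * u ^ (r/2)) ≤ t ^ r + u ^ r := by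
    nlinarith [sq_nonneg (t ^ (r/2) - u ^ (r/2))]
  have htu : 0 < t * u := mul_pos ht hu
  have hle : t * u ≤ ((t+u)/2) ^ (2:ℝ) := by
    rw [show (2:ℝ) = ((2:ℕ):ℝ) by norm_num, Real.rpow_natCast]
    nlinarith [sq_nonneg (t - u)]
  have h3 : ((t + u)/2) ^ r ≤ (t*u) ^ (r/2) := by
    have := Real.rpow_le_rpow_of_nonpos htu hle (by linarith : r/2 ≤ 0)
    calc ((t+u)/2) ^ r = (((t+u)/2) ^ (2:ℝ)) ^ (r/2) := by
          rw [← Real.rpow_mul (by positivity)]; congr 1; ring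
      _ ≤ (t*u) ^ (r/2) := this
  nlinarith [h3, h2, h1]

private lemma lemA {p a c : ℝ} (hp : 1 ≤ p) (hc : 0 ≤ c) (hca : c ≤ a) :
    a ^ p - c ^ p ≤ p * (a - c) * ((a ^ p + c ^ p) / 2) ^ ((p - 1) / p) := by
  have hp0 : 0 < p := lt_of_lt_of_le one_pos hp
  rcases eq_or_lt_of_le hca with rfl | hlt
  · simp
  have ha : 0 ≤ a := le_trans hc hlt.le
  have hCA : c ^ p < a ^ p := Real.rpow_lt_rpow hc hlt hp0
  have hC0 : 0 ≤ c ^ p := Real.rpow_nonneg hc p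
  set A := a ^ p with hA
  set C := c ^ p with hC
  set r : ℝ := (1 - p) / p with hr
  have hr0 : r ≤ 0 := div_nonpos_of_nonpos_of_nonneg (by linarith) hp0.le
  have hr1 : (-1 : ℝ) < r := by
    rw [hr, lt_div_iff₀ hp0]; linarith
  have hr1' : r + 1 = 1/p := by rw [hr]; field_simp; ring
  have hint : ∫ t in C..A, t ^ r = (a - c) * p := by
    rw [integral_rpow (Or.inl hr1), hr1']
    have hA1 : A ^ ((1:ℝ)/p) = a := by
      rw [hA, ← Real.rpow_mul ha]
      rw [mul_one_div, div_self hp0.ne', Real.rpow_one]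
    have hC1 : C ^ ((1:ℝ)/p) = c := by
      rw [hC, ← Real.rpow_mul hc]
      rw [mul_one_div, div_self hp0.ne', Real.rpow_one]
    rw [hA1, hC1]
    field_simp
  have hi1 : IntervalIntegrable (fun t : ℝ => t ^ r) volume C A :=
    intervalIntegral.intervalIntegrable_rpow' hr1
  have hi2 : IntervalIntegrable (fun t : ℝ => (A + C - t) ^ r) volume C A := by
    have h := (intervalIntegral.intervalIntegrable_rpow' (a := C) (b := A) hr1).comp_sub_left (A + C)
    simpa using h.symm
  have hrefl : (∫ t in C..A, (A + C - t) ^ r) = ∫ t in C..A, t ^ r := by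
    have h := intervalIntegral.integral_comp_sub_left (a := C) (b := A) (fun t : ℝ => t ^ r) (A + C)
    simpa using h
  have hhalf : (∫ t in C..A, ((t ^ r + (A + C - t) ^ r) / 2)) = ∫ t in C..A, t ^ r := by
    rw [intervalIntegral.integral_div, intervalIntegral.integral_add hi1 hi2, hrefl]
    ring
  have hne : ∀ c0 : ℝ, ∀ᵐ t : ℝ, t ≠ c0 := fun c0 => by
    rw [ae_iff]
    have : {a : ℝ | ¬a ≠ c0} = {c0} := by ext z; simp
    rw [this]
    exact measure_singleton c0
  have hmono : (A - C) * ((A + C)/2) ^ r ≤ ∫ t in C..A, t ^ r := by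
    rw [← hhalf]
    have hconst : (∫ _t in C..A, (((A + C)/2 : ℝ) ^ r)) = (A - C) * ((A+C)/2) ^ r := by
      simp [intervalIntegral.integral_const, smul_eq_mul]
    rw [← hconst]
    apply intervalIntegral.integral_mono_ae_restrict hCA.le intervalIntegrable_const
      ((hi1.add hi2).div_const 2)
    filter_upwards [ae_restrict_mem measurableSet_Icc,
      Filter.Eventually.filter_mono (ae_mono Measure.restrict_le_self) (hne C),
      Filter.Eventually.filter_mono (ae_mono Measure.restrict_le_self) (hne A)]
      with t htI htC htA
    have ht0 : 0 < t := lt_of_le_of_lt hC0 (lt_of_le_of_ne htI.1 (Ne.symm htC))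
    have ht1 : 0 < A + C - t := by
      have := lt_of_le_of_ne htI.2 htA
      linarith
    have h := midpoint_rpow hr0 ht0 ht1
    have he : t + (A + C - t) = A + C := by ring
    rw [he] at h
    linarith
  have hMmid : 0 < (A + C) / 2 := by
    have : 0 < A := lt_of_le_of_lt hC0 hCA
    linarith
  have hfin : (A - C) * ((A+C)/2) ^ r ≤ (a - c) * p := by rw [← hint]; exact hmono
  have hpos : (0:ℝ) < ((A+C)/2 : ℝ) ^ ((p-1)/p) := Real.rpow_pos_of_pos hMmid _
  have hmul : ((A+C)/2 : ℝ) ^ r * ((A+C)/2 : ℝ) ^ ((p-1)/p) = 1 := by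
    rw [← Real.rpow_add hMmid]
    have hz : r + (p-1)/p = 0 := by rw [hr]; field_simp; ring
    rw [hz, Real.rpow_zero]
  calc A - C = ((A - C) * ((A+C)/2) ^ r) * ((A+C)/2) ^ ((p-1)/p) := by
        rw [mul_assoc, hmul, mul_one]
    _ ≤ ((a - c) * p) * ((A+C)/2) ^ ((p-1)/p) := mul_le_mul_of_nonneg_right hfin hpos.le
    _ = p * (a - c) * ((A + C)/2) ^ ((p-1)/p) := by ring

private lemma coreIneq {p a c s d : ℝ} (hp : 1 ≤ p) (hc : 0 ≤ c) (hca : c ≤ a)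
    (hs : 0 ≤ s) (hd : 0 ≤ d) (hd2 : d ^ 2 = (a - c) ^ 2 + a * c * s ^ 2) :
    s * c ^ p + (a ^ p - c ^ p) ≤
      Real.sqrt (p ^ 2 + 1) * d * ((a ^ p + c ^ p) / 2) ^ ((p - 1) / p) := by
  have hp0 : 0 < p := lt_of_lt_of_le one_pos hp
  have ha : 0 ≤ a := le_trans hc hca
  set M := ((a ^ p + c ^ p) / 2 : ℝ) ^ ((p - 1) / p) with hM
  have hap : 0 ≤ a ^ p := Real.rpow_nonneg ha p
  have hcp0 : 0 ≤ c ^ p := Real.rpow_nonneg hc p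
  have hM0 : 0 ≤ M := Real.rpow_nonneg (by positivity) _
  have hcp : c ^ p ≤ Real.sqrt (a * c) * M := by
    rcases eq_or_lt_of_le hc with rfl | hc0
    · rw [Real.zero_rpow hp0.ne']
      positivity
    · have h1 : c ≤ Real.sqrt (a * c) := by
        have h := Real.sqrt_le_sqrt (show c * c ≤ a * c by nlinarith)
        rwa [Real.sqrt_mul_self hc] at h
      have h2 : c ^ (p - 1) ≤ M := by
        rw [hM]
        calc c ^ (p-1) = (c ^ p) ^ ((p-1)/p) := by
              rw [← Real.rpow_mul hc]
              congr 1
              field_simp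
          _ ≤ ((a^p + c^p)/2) ^ ((p-1)/p) := by
              apply Real.rpow_le_rpow hcp0 ?_ (div_nonneg (by linarith) hp0.le)
              have : c ^ p ≤ a ^ p := Real.rpow_le_rpow hc hca hp0.le
              linarith
      have hsplit : c ^ (1:ℝ) * c ^ (p - 1) = c ^ p := by
        rw [← Real.rpow_add hc0]
        norm_num
      calc c ^ p = c ^ (1:ℝ) * c ^ (p-1) := hsplit.symm
        _ = c * c ^ (p-1) := by rw [Real.rpow_one]
        _ ≤ Real.sqrt (a*c) * M := mul_le_mul h1 h2 (by positivity) (Real.sqrt_nonneg _)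
  have hA := lemA hp hc hca
  have step1 : s * c ^ p + (a ^ p - c ^ p) ≤ (s * Real.sqrt (a*c) + p * (a - c)) * M := by
    have t1 : s * c ^ p ≤ s * (Real.sqrt (a*c) * M) := mul_le_mul_of_nonneg_left hcp hs
    calc s * c ^ p + (a ^ p - c ^ p) ≤ s * (Real.sqrt (a*c) * M) + p * (a - c) * M :=
          add_le_add t1 hA
      _ = (s * Real.sqrt (a*c) + p * (a - c)) * M := by ring
  have step2 : s * Real.sqrt (a*c) + p * (a - c) ≤ Real.sqrt (p^2+1) * d := by
    set P := s * Real.sqrt (a*c) with hP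
    have hP0 : 0 ≤ P := mul_nonneg hs (Real.sqrt_nonneg _)
    have hP2 : P ^ 2 = a * c * s ^ 2 := by
      rw [hP, mul_pow, Real.sq_sqrt (mul_nonneg ha hc)]; ring
    have hLnn : 0 ≤ P + p * (a - c) := by
      have : 0 ≤ p * (a - c) := mul_nonneg hp0.le (by linarith)
      linarith
    have hsq : (P + p * (a - c)) ^ 2 ≤ (p ^ 2 + 1) * d ^ 2 := by
      rw [hd2]
      nlinarith [sq_nonneg ((a - c) - p * P), hP2]
    calc P + p * (a - c) ≤ Real.sqrt ((p^2+1) * d^2) := by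
          rw [Real.le_sqrt hLnn (by positivity)]
          exact hsq
      _ = Real.sqrt (p^2+1) * d := by
          rw [Real.sqrt_mul (by positivity), Real.sqrt_sq hd]
  calc s * c ^ p + (a ^ p - c ^ p) ≤ (s * Real.sqrt (a*c) + p*(a-c)) * M := step1
    _ ≤ (Real.sqrt (p^2+1) * d) * M := mul_le_mul_of_nonneg_right step2 hM0
    _ = Real.sqrt (p^2+1) * d * M := by ring

private lemma norm_smul_sub_sq {a c : ℝ} {w1 w2 : ℂ} (hw1 : ‖w1‖ = 1) (hw2 : ‖w2‖ = 1) :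
    ‖(a:ℂ) * w1 - (c:ℂ) * w2‖ ^ 2 = (a - c) ^ 2 + a * c * ‖w1 - w2‖ ^ 2 := by
  have key : ∀ z : ℂ, ‖z‖ ^ 2 = Complex.normSq z := fun z => by
    rw [Complex.sq_norm]
  have e1 : w1.re^2 + w1.im^2 = 1 := by
    have h := key w1
    rw [hw1] at h
    simp only [Complex.normSq_apply] at h
    nlinarith [h]
  have e2 : w2.re^2 + w2.im^2 = 1 := by
    have h := key w2
    rw [hw2] at h
    simp only [Complex.normSq_apply] at h
    nlinarith [h]
  rw [key, key]
  simp only [Complex.normSq_apply, Complex.sub_re, Complex.sub_im, Complex.mul_re,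
    Complex.mul_im, Complex.ofReal_re, Complex.ofReal_im]
  linear_combination (a^2 - a*c) * e1 + (c^2 - a*c) * e2

private lemma norm_sub_conj {e : ℂ} (z w : ℂ) (he : ‖e‖ = 1) :
    ‖z - (starRingEnd ℂ) e * w‖ = ‖w - e * z‖ := by
  have hee : (starRingEnd ℂ) e * e = 1 := by
    rw [← Complex.normSq_eq_conj_mul_self]
    have : Complex.normSq e = 1 := by
      rw [← Complex.sq_norm, he]
      norm_num
    rw [this, Complex.ofReal_one]
  have h1 : (starRingEnd ℂ) e * (w - e * z) = (starRingEnd ℂ) e * w - z := by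
    have : (starRingEnd ℂ) e * (e * z) = z := by rw [← mul_assoc, hee, one_mul]
    rw [mul_sub, this]
  calc ‖z - (starRingEnd ℂ) e * w‖ = ‖(starRingEnd ℂ) e * w - z‖ := norm_sub_rev _ _
    _ = ‖(starRingEnd ℂ) e * (w - e * z)‖ := by rw [h1]
    _ = ‖(starRingEnd ℂ) e‖ * ‖w - e * z‖ := norm_mul _ _
    _ = ‖w - e * z‖ := by rw [RCLike.norm_conj, he, one_mul]

private lemma keyIneq' {p : ℝ} (hp : 1 ≤ p) (u v e : ℂ) (he : ‖e‖ = 1) (hvu : ‖v‖ ≤ ‖u‖) :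
    ‖(if u = 0 then 1 else u / (‖u‖:ℂ)) - e * (if v = 0 then 1 else v / (‖v‖:ℂ))‖ * ‖v‖ ^ p
      + (‖u‖ ^ p - ‖v‖ ^ p) ≤
      Real.sqrt (p^2+1) * ‖u - e*v‖ * ((‖u‖^p + ‖v‖^p)/2) ^ ((p-1)/p) := by
  have hp0 : 0 < p := lt_of_lt_of_le one_pos hp
  by_cases hv : v = 0
  · subst hv
    simp only [norm_zero, Real.zero_rpow hp0.ne', mul_zero, zero_add, mul_zero, sub_zero]
    have hA := lemA hp (le_refl 0) (norm_nonneg u)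
    rw [Real.zero_rpow hp0.ne'] at hA
    have hP : p ≤ Real.sqrt (p^2+1) :=
      (Real.le_sqrt hp0.le (by positivity)).mpr (by linarith)
    have hMn : (0:ℝ) ≤ ((‖u‖^p + 0)/2) ^ ((p-1)/p) :=
      Real.rpow_nonneg (by positivity) _
    calc ‖u‖ ^ p = ‖u‖ ^ p - 0 := by ring
      _ ≤ p * (‖u‖ - 0) * ((‖u‖^p + 0)/2) ^ ((p-1)/p) := hA
      _ ≤ Real.sqrt (p^2+1) * ‖u‖ * ((‖u‖^p + 0)/2) ^ ((p-1)/p) := by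
          apply mul_le_mul_of_nonneg_right ?_ hMn
          rw [sub_zero]
          exact mul_le_mul_of_nonneg_right hP (norm_nonneg u)
  · have hu : u ≠ 0 := by
      intro h
      apply hv
      rw [h, norm_zero] at hvu
      exact norm_eq_zero.mp (le_antisymm hvu (norm_nonneg v))
    rw [if_neg hu, if_neg hv]
    set a := ‖u‖ with ha
    set c := ‖v‖ with hc
    have ha0 : 0 < a := norm_pos_iff.mpr hu
    have hc0 : 0 < c := norm_pos_iff.mpr hv
    set w1 : ℂ := u / (a:ℂ) with hw1def
    set w2 : ℂ := v / (c:ℂ) with hw2def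
    have hw1 : ‖w1‖ = 1 := by
      rw [hw1def, norm_div, Complex.norm_real, Real.norm_of_nonneg ha0.le, div_self ha0.ne']
    have hw2 : ‖w2‖ = 1 := by
      rw [hw2def, norm_div, Complex.norm_real, Real.norm_of_nonneg hc0.le, div_self hc0.ne']
    have hew2 : ‖e * w2‖ = 1 := by rw [norm_mul, he, hw2, mul_one]
    have haC : (a:ℂ) ≠ 0 := by exact_mod_cast ha0.ne'
    have hcC : (c:ℂ) ≠ 0 := by exact_mod_cast hc0.ne'
    have hrepr : u - e * v = (a:ℂ) * w1 - (c:ℂ) * (e * w2) := by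
      have h1 : (a:ℂ) * w1 = u := by rw [hw1def]; field_simp
      have h2 : (c:ℂ) * (e * w2) = e * v := by rw [hw2def]; field_simp
      rw [h1, h2]
    have hd2 : ‖u - e*v‖ ^ 2 = (a - c) ^ 2 + a * c * ‖w1 - e * w2‖ ^ 2 := by
      rw [hrepr]
      exact norm_smul_sub_sq hw1 hew2
    exact coreIneq hp hc0.le hvu (norm_nonneg _) (norm_nonneg _) hd2

private lemma keyIneq {p : ℝ} (hp : 1 ≤ p) (u v e : ℂ) (he : ‖e‖ = 1) :
    ‖(if u = 0 then 1 else u / (‖u‖:ℂ)) - e * (if v = 0 then 1 else v / (‖v‖:ℂ))‖ *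
        min (‖u‖ ^ p) (‖v‖ ^ p) + |‖u‖ ^ p - ‖v‖ ^ p| ≤
      Real.sqrt (p^2+1) * ‖u - e*v‖ * ((‖u‖^p + ‖v‖^p)/2) ^ ((p-1)/p) := by
  have hp0 : 0 < p := lt_of_lt_of_le one_pos hp
  rcases le_total (‖v‖) (‖u‖) with hvu | huv
  · have hle : ‖v‖^p ≤ ‖u‖^p := Real.rpow_le_rpow (norm_nonneg _) hvu hp0.le
    rw [min_eq_right hle, _root_.abs_of_nonneg (by linarith)]
    exact keyIneq' hp u v e he hvu
  · have hle : ‖u‖^p ≤ ‖v‖^p := Real.rpow_le_rpow (norm_nonneg _) huv hp0.le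
    have habs : |‖u‖^p - ‖v‖^p| = ‖v‖^p - ‖u‖^p := by
      rw [abs_sub_comm]
      exact _root_.abs_of_nonneg (by linarith)
    rw [min_eq_left hle, habs]
    have h := keyIneq' hp v u ((starRingEnd ℂ) e) (by rw [RCLike.norm_conj, he]) huv
    have hs : ‖(if v = 0 then 1 else v/(‖v‖:ℂ)) - (starRingEnd ℂ) e * (if u = 0 then 1 else u/(‖u‖:ℂ))‖
        = ‖(if u = 0 then 1 else u/(‖u‖:ℂ)) - e * (if v = 0 then 1 else v/(‖v‖:ℂ))‖ :=
      norm_sub_conj _ _ he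
    have hd : ‖v - (starRingEnd ℂ) e * u‖ = ‖u - e * v‖ := norm_sub_conj _ _ he
    rw [hs, hd] at h
    rw [add_comm (‖u‖ ^ p) (‖v‖ ^ p)]
    exact h
/-- the magnetic co-area inequality. For finitely supported `f` and `p ≥ 1`,
`∫₀^∞ (ι_{1,θ}(Ω_t(|f|^p)) + ½ b(∂Ω_t(|f|^p))) dt` is bounded by
`(√(p²+1)/2) Σ_{x,y} b(x,y)|f(x) − e^{iθ(x,y)}f(y)| ((|f(x)|^p+|f(y)|^p)/2)^{(p−1)/p}`. -/
theorem magnetic_coarea [Countable X]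
    (b θ : X → X → ℝ) (q m : X → ℝ) (hG : IsMagneticGraph b θ m)
    (p : ℝ) (hp : 1 ≤ p)
    (f : X → ℂ) (hf : (Function.support f).Finite) :
    (∫ t in Set.Ioi (0 : ℝ),
        (frust b θ 1 (hf.toFinset.filter (fun x => t < ‖f x‖ ^ p)) +
          (1 / 2) * bBoundary b (hf.toFinset.filter (fun x => t < ‖f x‖ ^ p)))) ≤
      (Real.sqrt (p ^ 2 + 1) / 2) *
        ∑' x, ∑' y, b x y * ‖f x - Complex.exp ((θ x y : ℂ) * Complex.I) * f y‖ *
          ((‖f x‖ ^ p + ‖f y‖ ^ p) / 2) ^ ((p - 1) / p) := by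

  classical
  obtain ⟨hb0, hbsym, hbdiag, hbsum, hθp, hm⟩ := hG
  have hp0 : 0 < p := lt_of_lt_of_le one_pos hp
  set S : Finset X := hf.toFinset with hSdef
  have hmemS : ∀ x : X, x ∈ S ↔ f x ≠ 0 := fun x => by
    simp [hSdef, Set.Finite.mem_toFinset, Function.mem_support]
  have hfS : ∀ x, x ∉ S → f x = 0 := fun x hx => by
    by_contra h; exact hx ((hmemS x).mpr h)
  set A : X → ℝ := fun x => ‖f x‖ ^ p with hAdef
  have hA0 : ∀ x, 0 ≤ A x := fun x => Real.rpow_nonneg (norm_nonneg _) p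
  have hAz : ∀ x, x ∉ S → A x = 0 := fun x hx => by
    simp only [hAdef]; rw [hfS x hx, norm_zero, Real.zero_rpow hp0.ne']
  set E : X → X → ℂ := fun x y => Complex.exp ((θ x y : ℂ) * Complex.I) with hEdef
  have hE1 : ∀ x y, ‖E x y‖ = 1 := fun x y => by
    simp only [hEdef]
    exact Complex.norm_exp_ofReal_mul_I _
  set σ : X → ℂ := fun x => if f x = 0 then 1 else f x / (‖f x‖ : ℂ) with hσdef
  have hσ1 : ∀ x, ‖σ x‖ = 1 := fun x => by
    simp only [hσdef]
    split_ifs with h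
    · simp
    · rw [norm_div, Complex.norm_real, Real.norm_of_nonneg (norm_nonneg _),
        div_self (norm_ne_zero_iff.mpr h)]
  set sfn : X → X → ℝ := fun x y => ‖σ x - E x y * σ y‖ with hsdef
  set dfn : X → X → ℝ := fun x y => ‖f x - E x y * f y‖ with hddef
  set Mfn : X → X → ℝ := fun x y => ((A x + A y)/2) ^ ((p-1)/p) with hMdef
  set B : X → ℝ := fun x => ∑' y, b x y with hBdef
  have hEconj : ∀ x y, E y x = (starRingEnd ℂ) (E x y) := fun x y => by
    obtain ⟨k, hk⟩ := hθp x y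
    have hθyx : (θ y x : ℝ) = 2 * Real.pi * k - θ x y := by linarith
    simp only [hEdef]
    rw [← Complex.exp_conj]
    have hconj : (starRingEnd ℂ) ((θ x y : ℂ) * Complex.I) = -(θ x y : ℂ) * Complex.I := by
      simp [Complex.conj_ofReal]
    rw [hconj, hθyx]
    push_cast
    rw [show ((2:ℂ) * (Real.pi:ℂ) * (k:ℂ) - (θ x y:ℂ)) * Complex.I
        = (k:ℂ) * (2 * (Real.pi:ℂ) * Complex.I) + (-(θ x y:ℂ) * Complex.I) by ring]
    rw [Complex.exp_add, Complex.exp_int_mul_two_pi_mul_I, one_mul]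
  have hdsym : ∀ x y, dfn y x = dfn x y := fun x y => by
    simp only [hddef]
    rw [hEconj x y]
    exact norm_sub_conj (f y) (f x) (hE1 x y)
  have hMsym : ∀ x y, Mfn y x = Mfn x y := fun x y => by
    simp only [hMdef]; rw [add_comm]
  -- crude bounds
  set K : ℝ := ∑ z ∈ S, ‖f z‖ with hKdef
  set KA : ℝ := ∑ z ∈ S, A z with hKAdef
  have hK : ∀ y, ‖f y‖ ≤ K := fun y => by
    by_cases hy : y ∈ S
    · exact Finset.single_le_sum (fun z _ => norm_nonneg (f z)) hy
    · rw [hfS y hy, norm_zero, hKdef]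
      exact Finset.sum_nonneg fun z _ => norm_nonneg _
  have hKA : ∀ y, A y ≤ KA := fun y => by
    by_cases hy : y ∈ S
    · exact Finset.single_le_sum (fun z _ => hA0 z) hy
    · rw [hAz y hy, hKAdef]
      exact Finset.sum_nonneg fun z _ => hA0 z
  have hK0 : 0 ≤ K := Finset.sum_nonneg fun z _ => norm_nonneg _
  have hKA0 : 0 ≤ KA := Finset.sum_nonneg fun z _ => hA0 z
  have hexp0 : 0 ≤ (p-1)/p := div_nonneg (by linarith) hp0.le
  have hd0 : ∀ x y, 0 ≤ dfn x y := fun x y => norm_nonneg _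
  have hM0' : ∀ x y, 0 ≤ Mfn x y := fun x y =>
    Real.rpow_nonneg (by have := hA0 x; have := hA0 y; linarith) _
  have hdbd : ∀ x y, dfn x y ≤ ‖f x‖ + K := fun x y => by
    simp only [hddef]
    calc ‖f x - E x y * f y‖ ≤ ‖f x‖ + ‖E x y * f y‖ := norm_sub_le _ _
      _ = ‖f x‖ + ‖f y‖ := by rw [norm_mul, hE1, one_mul]
      _ ≤ ‖f x‖ + K := by linarith [hK y]
  have hMbd : ∀ x y, Mfn x y ≤ ((A x + KA)/2) ^ ((p-1)/p) := fun x y => by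
    simp only [hMdef]
    apply Real.rpow_le_rpow (by have := hA0 x; have := hA0 y; linarith) ?_ hexp0
    have := hKA y; linarith
  have hMbd2 : ∀ x y, Mfn x y ≤ ((KA + KA)/2) ^ ((p-1)/p) := fun x y => by
    simp only [hMdef]
    apply Real.rpow_le_rpow (by have := hA0 x; have := hA0 y; linarith) ?_ hexp0
    have := hKA x; have := hKA y; linarith
  have hterm0 : ∀ x y, 0 ≤ b x y * dfn x y * Mfn x y := fun x y =>
    mul_nonneg (mul_nonneg (hb0 x y) (hd0 x y)) (hM0' x y)
  have hprodbd : ∀ x y (c1 c2 : ℝ), dfn x y ≤ c1 → Mfn x y ≤ c2 →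
      b x y * dfn x y * Mfn x y ≤ b x y * (c1 * c2) := fun x y c1 c2 h1 h2 => by
    rw [mul_assoc]
    apply mul_le_mul_of_nonneg_left ?_ (hb0 x y)
    exact mul_le_mul h1 h2 (hM0' x y) (le_trans (hd0 x y) h1)
  have hrowsum : ∀ x, Summable (fun y => b x y * dfn x y * Mfn x y) := fun x => by
    apply Summable.of_nonneg_of_le (fun y => hterm0 x y)
      (fun y => hprodbd x y _ _ (hdbd x y) (hMbd x y))
    exact (hbsum x).mul_right _
  have hcolb : ∀ y, Summable (fun x => b x y) := fun y =>
    (hbsum y).congr (fun x => hbsym y x)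
  have hdbd2 : ∀ x y, dfn x y ≤ K + K := fun x y => by
    have := hdbd x y; have := hK x; linarith
  have hcolsum : ∀ y, Summable (fun x => b x y * dfn x y * Mfn x y) := fun y => by
    apply Summable.of_nonneg_of_le (fun x => hterm0 x y)
      (fun x => hprodbd x y _ _ (hdbd2 x y) (hMbd2 x y))
    exact (hcolb y).mul_right _
  set R : X → ℝ := fun x => ∑' y, b x y * dfn x y * Mfn x y with hRdef
  have hR0 : ∀ x, 0 ≤ R x := fun x => tsum_nonneg (fun y => hterm0 x y)
  have hdzz : ∀ x y, f x = 0 → f y = 0 → dfn x y = 0 := fun x y h1 h2 => by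
    simp only [hddef, h1, h2, mul_zero, sub_zero, norm_zero]
  have hRS : Summable R := by
    rw [← S.finite_toSet.summable_compl_iff (f := R)]
    apply Summable.of_nonneg_of_le (fun x => hR0 _)
      (f := fun x : ↥((↑S : Set X)ᶜ) => ∑ y ∈ S, b (↑x) y * ((K + K) * ((KA + KA)/2) ^ ((p-1)/p)))
      ?_ ?_
    · intro x
      have hfx : f ↑x = 0 := hfS _ x.2
      have hRx : R ↑x = ∑ y ∈ S, b ↑x y * dfn ↑x y * Mfn ↑x y := by
        simp only [hRdef]
        apply tsum_eq_sum
        intro y hy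
        rw [hdzz ↑x y hfx (hfS y hy), mul_zero, zero_mul]
      rw [hRx]
      exact Finset.sum_le_sum fun y _ => hprodbd _ y _ _ (hdbd2 _ y) (hMbd2 _ y)
    · apply summable_sum
      intro y _
      exact ((hcolb y).subtype _).mul_right _
  -- Part 1 : the integral bound
  have hfrust_nonneg : ∀ (W : Finset X), 0 ≤ frust b θ 1 W := fun W => by
    apply Real.sInf_nonneg
    rintro r ⟨τ, hτ, rfl⟩
    apply mul_nonneg (by norm_num)
    exact Finset.sum_nonneg fun x _ => Finset.sum_nonneg fun y _ =>
      mul_nonneg (hb0 x y) (Real.rpow_nonneg (norm_nonneg _) _)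
  have hbB_nonneg : ∀ (W : Finset X), 0 ≤ bBoundary b W := fun W => by
    apply add_nonneg
    · exact Finset.sum_nonneg fun x _ => tsum_nonneg fun y => hb0 _ _
    · exact Finset.sum_nonneg fun x _ => tsum_nonneg fun y => hb0 _ _
  have hfrust_le : ∀ (W : Finset X),
      frust b θ 1 W ≤ (1/2) * ∑ x ∈ W, ∑ y ∈ W, b x y * sfn x y := fun W => by
    apply csInf_le
    · refine ⟨0, ?_⟩
      rintro r ⟨τ, hτ, rfl⟩
      apply mul_nonneg (by norm_num)
      exact Finset.sum_nonneg fun x _ => Finset.sum_nonneg fun y _ =>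
        mul_nonneg (hb0 x y) (Real.rpow_nonneg (norm_nonneg _) _)
    · refine ⟨σ, fun x _ => hσ1 x, ?_⟩
      congr 1
      apply Finset.sum_congr rfl; intro x _
      apply Finset.sum_congr rfl; intro y _
      rw [Real.rpow_one]
  have hbB_eq : ∀ (W : Finset X), (1/2) * bBoundary b W
      = (∑ x ∈ W, B x) - ∑ x ∈ W, ∑ y ∈ W, b x y := fun W => by
    have h1 : ∀ x : X, (∑' y : {y : X // y ∉ W}, b x ↑y) = B x - ∑ y ∈ W, b x y := fun x => by
      have h := Summable.sum_add_tsum_compl (s := W) (hbsum x)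
      have h2 : (∑' y : {y : X // y ∉ W}, b x ↑y) = ∑' (y : ↑((↑W : Set X)ᶜ)), b x ↑y := rfl
      simp only [hBdef]
      rw [h2]
      linarith [h]
    have h1' : ∀ y : X, (∑' x : {x : X // x ∉ W}, b ↑x y) = B y - ∑ x ∈ W, b y x := fun y => by
      have e : (∑' x : {x : X // x ∉ W}, b ↑x y) = ∑' x : {x : X // x ∉ W}, b y ↑x :=
        tsum_congr fun x => hbsym _ _
      rw [e]
      exact h1 y
    have e2 : ∑ y ∈ W, ∑ x ∈ W, b y x = ∑ x ∈ W, ∑ y ∈ W, b x y := rfl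
    have hA1 : (∑ x ∈ W, ∑' y : {y : X // y ∉ W}, b x ↑y)
        = (∑ x ∈ W, B x) - ∑ x ∈ W, ∑ y ∈ W, b x y := by
      calc (∑ x ∈ W, ∑' y : {y : X // y ∉ W}, b x ↑y)
          = ∑ x ∈ W, (B x - ∑ y ∈ W, b x y) := Finset.sum_congr rfl fun x _ => h1 x
        _ = (∑ x ∈ W, B x) - ∑ x ∈ W, ∑ y ∈ W, b x y := (Finset.sum_sub_distrib _ _)
    have hA2 : (∑ y ∈ W, ∑' x : {x : X // x ∉ W}, b ↑x y)
        = (∑ x ∈ W, B x) - ∑ x ∈ W, ∑ y ∈ W, b x y := by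
      calc (∑ y ∈ W, ∑' x : {x : X // x ∉ W}, b ↑x y)
          = ∑ y ∈ W, (B y - ∑ x ∈ W, b y x) := Finset.sum_congr rfl fun y _ => h1' y
        _ = (∑ y ∈ W, B y) - ∑ y ∈ W, ∑ x ∈ W, b y x := (Finset.sum_sub_distrib _ _)
        _ = (∑ x ∈ W, B x) - ∑ x ∈ W, ∑ y ∈ W, b x y := rfl
    rw [show bBoundary b W = (∑ x ∈ W, ∑' y : {y : X // y ∉ W}, b x ↑y) +
        (∑ y ∈ W, ∑' x : {x : X // x ∉ W}, b ↑x y) from rfl]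
    rw [hA1, hA2]
    ring
  -- step functions
  set φ : X → X → ℝ → ℝ := fun x y t =>
    Set.indicator (Set.Ioo 0 (min (A x) (A y))) (fun _ => (1/2) * (b x y * sfn x y) - b x y) t
    with hφdef
  set ψ : X → ℝ → ℝ := fun x t => Set.indicator (Set.Ioo 0 (A x)) (fun _ => B x) t with hψdef
  set h : ℝ → ℝ := fun t => (∑ x ∈ S, ∑ y ∈ S, φ x y t) + ∑ x ∈ S, ψ x t with hhdef
  have hgh : ∀ t : ℝ, 0 < t →
      frust b θ 1 (S.filter (fun x => t < ‖f x‖ ^ p)) +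
        (1/2) * bBoundary b (S.filter (fun x => t < ‖f x‖ ^ p)) ≤ h t := by
    intro t ht
    have hψt : ∀ x, ψ x t = if t < A x then B x else 0 := fun x => by
      simp only [hψdef, Set.indicator_apply, Set.mem_Ioo]
      by_cases hx : t < A x
      · rw [if_pos ⟨ht, hx⟩, if_pos hx]
      · rw [if_neg (fun hcon => hx hcon.2), if_neg hx]
    have hφt : ∀ x y, φ x y t =
        if t < A x ∧ t < A y then (1/2) * (b x y * sfn x y) - b x y else 0 := fun x y => by
      simp only [hφdef, Set.indicator_apply, Set.mem_Ioo, lt_min_iff]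
      by_cases hx : t < A x ∧ t < A y
      · rw [if_pos ⟨ht, hx⟩, if_pos hx]
      · rw [if_neg (fun hcon => hx hcon.2), if_neg hx]
    have hsum2 : ∑ x ∈ S, ψ x t = ∑ x ∈ S.filter (fun x => t < ‖f x‖ ^ p), B x := by
      rw [Finset.sum_filter]
      apply Finset.sum_congr rfl
      intro x _
      rw [hψt x]
    have hsum1 : ∑ x ∈ S, ∑ y ∈ S, φ x y t =
        ∑ x ∈ S.filter (fun x => t < ‖f x‖ ^ p), ∑ y ∈ S.filter (fun x => t < ‖f x‖ ^ p),
          ((1/2) * (b x y * sfn x y) - b x y) := by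
      rw [Finset.sum_filter]
      apply Finset.sum_congr rfl
      intro x _
      rw [Finset.sum_filter]
      by_cases hx : t < ‖f x‖ ^ p
      · rw [if_pos hx]
        apply Finset.sum_congr rfl
        intro y _
        rw [hφt x y]
        simp only [hAdef]
        by_cases hy : t < ‖f y‖ ^ p
        · rw [if_pos ⟨hx, hy⟩, if_pos hy]
        · rw [if_neg (fun hcon => hy hcon.2), if_neg hy]
      · rw [if_neg hx]
        apply Finset.sum_eq_zero
        intro y _
        rw [hφt x y]
        simp only [hAdef]
        rw [if_neg (fun hcon => hx hcon.1)]
    set W := S.filter (fun x => t < ‖f x‖ ^ p) with hWdef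
    have hfr := hfrust_le W
    have hbb := hbB_eq W
    have e1 : ∑ x ∈ W, ∑ y ∈ W, ((1/2) * (b x y * sfn x y) - b x y)
        = (1/2) * (∑ x ∈ W, ∑ y ∈ W, b x y * sfn x y) - ∑ x ∈ W, ∑ y ∈ W, b x y := by
      rw [Finset.mul_sum, ← Finset.sum_sub_distrib]
      apply Finset.sum_congr rfl; intro x _
      rw [Finset.mul_sum, ← Finset.sum_sub_distrib]
    simp only [hhdef]
    rw [hsum1, hsum2, e1, hbb]
    linarith [hfr]
  -- integrability
  have hφint : ∀ x y, Integrable (φ x y) (volume.restrict (Set.Ioi (0:ℝ))) := fun x y => by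
    simp only [hφdef]
    apply Integrable.restrict
    rw [integrable_indicator_iff measurableSet_Ioo]
    apply (integrableOn_const_iff).mpr
    right; exact measure_Ioo_lt_top
  have hψint : ∀ x, Integrable (ψ x) (volume.restrict (Set.Ioi (0:ℝ))) := fun x => by
    simp only [hψdef]
    apply Integrable.restrict
    rw [integrable_indicator_iff measurableSet_Ioo]
    apply (integrableOn_const_iff).mpr
    right; exact measure_Ioo_lt_top
  have hint1 : Integrable (fun t => ∑ x ∈ S, ∑ y ∈ S, φ x y t) (volume.restrict (Set.Ioi (0:ℝ))) := by
    apply integrable_finset_sum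
    intro x _
    exact integrable_finset_sum _ (fun y _ => hφint x y)
  have hint2 : Integrable (fun t => ∑ x ∈ S, ψ x t) (volume.restrict (Set.Ioi (0:ℝ))) :=
    integrable_finset_sum _ (fun x _ => hψint x)
  have hhint : Integrable h (volume.restrict (Set.Ioi (0:ℝ))) := by
    simp only [hhdef]
    exact hint1.add hint2
  -- value of ∫ h
  have hIioo : ∀ (m0 c : ℝ), 0 ≤ m0 →
      (∫ t in Set.Ioi (0:ℝ), Set.indicator (Set.Ioo 0 m0) (fun _ => c) t) = m0 * c := by
    intro m0 c hm0
    rw [integral_indicator_const c measurableSet_Ioo]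
    rw [Measure.real]
    rw [Measure.restrict_apply measurableSet_Ioo]
    rw [Set.inter_eq_left.mpr Set.Ioo_subset_Ioi_self]
    rw [Real.volume_Ioo, sub_zero, ENNReal.toReal_ofReal hm0, smul_eq_mul]
  have hIh : (∫ t in Set.Ioi (0:ℝ), h t) =
      (∑ x ∈ S, ∑ y ∈ S, ((1/2) * (b x y * sfn x y) - b x y) * min (A x) (A y))
        + ∑ x ∈ S, B x * A x := by
    simp only [hhdef]
    rw [integral_add hint1 hint2]
    congr 1
    · rw [integral_finset_sum _ (fun x _ => integrable_finset_sum _ (fun y _ => hφint x y))]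
      apply Finset.sum_congr rfl; intro x _
      rw [integral_finset_sum _ (fun y _ => hφint x y)]
      apply Finset.sum_congr rfl; intro y _
      simp only [hφdef]
      rw [hIioo _ _ (le_min (hA0 x) (hA0 y))]
      ring
    · rw [integral_finset_sum _ (fun x _ => hψint x)]
      apply Finset.sum_congr rfl; intro x _
      simp only [hψdef]
      rw [hIioo _ _ (hA0 x)]
      ring
  have hLHS_le : (∫ t in Set.Ioi (0 : ℝ),
      (frust b θ 1 (S.filter (fun x => t < ‖f x‖ ^ p)) +
        (1 / 2) * bBoundary b (S.filter (fun x => t < ‖f x‖ ^ p))))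
      ≤ ∫ t in Set.Ioi (0:ℝ), h t := by
    apply integral_mono_of_nonneg ?_ hhint ?_
    · refine (ae_restrict_iff' measurableSet_Ioi).2 (ae_of_all _ ?_)
      intro t ht
      exact add_nonneg (hfrust_nonneg _) (mul_nonneg (by norm_num) (hbB_nonneg _))
    · refine (ae_restrict_iff' measurableSet_Ioi).2 (ae_of_all _ ?_)
      intro t ht
      exact hgh t ht
  -- Part 2 : comparing with the RHS
  have hBsplit : ∀ x, B x = (∑ y ∈ S, b x y) + ∑' (y : ↑((↑S : Set X)ᶜ)), b x ↑y := fun x => by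
    simp only [hBdef]
    exact (Summable.sum_add_tsum_compl (s := S) (hbsum x)).symm
  set U : ℝ := ∑ x ∈ S, ∑' (y : ↑((↑S : Set X)ᶜ)), (b x ↑y * dfn x ↑y * Mfn x ↑y) with hUdef
  -- pointwise key inequality, both in S
  have hpair : ∀ x y, ((1/2) * (b x y * sfn x y) - b x y) * min (A x) (A y)
      + b x y * ((A x + A y)/2)
      ≤ (Real.sqrt (p^2+1)/2) * (b x y * dfn x y * Mfn x y) := by
    intro x y
    have key := keyIneq hp (f x) (f y) (E x y) (hE1 x y)
    have hσx : (if f x = 0 then (1:ℂ) else f x / (‖f x‖:ℂ)) = σ x := by rw [hσdef]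
    have hσy : (if f y = 0 then (1:ℂ) else f y / (‖f y‖:ℂ)) = σ y := by rw [hσdef]
    rw [hσx, hσy] at key
    have key2 : sfn x y * min (A x) (A y) + |A x - A y|
        ≤ Real.sqrt (p^2+1) * dfn x y * Mfn x y := by
      simp only [hsdef, hddef, hMdef, hAdef]
      exact key
    have habs : A x + A y - 2 * min (A x) (A y) = |A x - A y| := by
      rcases le_total (A x) (A y) with hle | hle
      · rw [min_eq_left hle, abs_sub_comm, _root_.abs_of_nonneg (by linarith)]; ring
      · rw [min_eq_right hle, _root_.abs_of_nonneg (by linarith)]; ring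
    have hb := hb0 x y
    calc ((1/2) * (b x y * sfn x y) - b x y) * min (A x) (A y) + b x y * ((A x + A y)/2)
        = (1/2) * (b x y) * (sfn x y * min (A x) (A y) + (A x + A y - 2 * min (A x) (A y))) := by
          ring
      _ = (1/2) * (b x y) * (sfn x y * min (A x) (A y) + |A x - A y|) := by rw [habs]
      _ ≤ (1/2) * (b x y) * (Real.sqrt (p^2+1) * dfn x y * Mfn x y) := by
          apply mul_le_mul_of_nonneg_left key2 (by positivity)
      _ = (Real.sqrt (p^2+1)/2) * (b x y * dfn x y * Mfn x y) := by ring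
  -- pointwise key inequality, y outside S
  have houtS : ∀ x, ∀ y : ↑((↑S : Set X)ᶜ), b x ↑y * A x
      ≤ Real.sqrt (p^2+1) * (b x ↑y * dfn x ↑y * Mfn x ↑y) := by
    intro x y
    have hy2 : (↑y : X) ∉ S := y.2
    have hfy : f ↑y = 0 := hfS _ hy2
    have key := keyIneq hp (f x) (f ↑y) (E x ↑y) (hE1 x ↑y)
    rw [hfy] at key
    simp only [norm_zero, Real.zero_rpow hp0.ne', mul_zero, sub_zero, add_zero] at key
    rw [min_eq_right (Real.rpow_nonneg (norm_nonneg _) p),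
      _root_.abs_of_nonneg (Real.rpow_nonneg (norm_nonneg _) p)] at key
    simp only [mul_zero, zero_add, sub_zero, add_zero] at key
    have key2 : A x ≤ Real.sqrt (p^2+1) * dfn x ↑y * Mfn x ↑y := by
      simp only [hddef, hMdef, hAdef, hfy, norm_zero, Real.zero_rpow hp0.ne',
        mul_zero, sub_zero, add_zero]
      exact key
    calc b x ↑y * A x ≤ b x ↑y * (Real.sqrt (p^2+1) * dfn x ↑y * Mfn x ↑y) :=
          mul_le_mul_of_nonneg_left key2 (hb0 _ _)
      _ = Real.sqrt (p^2+1) * (b x ↑y * dfn x ↑y * Mfn x ↑y) := by ring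
  have hcomplx : ∀ x, (∑' (y : ↑((↑S : Set X)ᶜ)), b x ↑y) * A x
      ≤ Real.sqrt (p^2+1) * ∑' (y : ↑((↑S : Set X)ᶜ)), (b x ↑y * dfn x ↑y * Mfn x ↑y) := by
    intro x
    rw [← tsum_mul_right, ← tsum_mul_left]
    apply Summable.tsum_le_tsum (fun y => houtS x y)
    · exact ((hbsum x).subtype _).mul_right _
    · exact ((hrowsum x).subtype _).mul_left _
  -- symmetrization identity
  have hD12 : (∑ x ∈ S, ∑ y ∈ S, b x y * A x) = ∑ x ∈ S, ∑ y ∈ S, b x y * A y := by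
    rw [Finset.sum_comm]
    exact Finset.sum_congr rfl fun x _ => Finset.sum_congr rfl fun y _ => by rw [hbsym]
  have hhalfid : (∑ x ∈ S, ∑ y ∈ S, b x y * ((A x + A y)/2)) = ∑ x ∈ S, ∑ y ∈ S, b x y * A x := by
    have hsplit : (∑ x ∈ S, ∑ y ∈ S, b x y * ((A x + A y)/2))
        = (∑ x ∈ S, ∑ y ∈ S, (b x y * A x)/2) + ∑ x ∈ S, ∑ y ∈ S, (b x y * A y)/2 := by
      rw [← Finset.sum_add_distrib]
      apply Finset.sum_congr rfl; intro x _
      rw [← Finset.sum_add_distrib]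
      apply Finset.sum_congr rfl; intro y _
      ring
    rw [hsplit]
    have d1 : (∑ x ∈ S, ∑ y ∈ S, (b x y * A x)/2) = (∑ x ∈ S, ∑ y ∈ S, b x y * A x)/2 := by
      rw [Finset.sum_div]
      exact Finset.sum_congr rfl fun x _ => (Finset.sum_div _ _ _).symm
    have d2 : (∑ x ∈ S, ∑ y ∈ S, (b x y * A y)/2) = (∑ x ∈ S, ∑ y ∈ S, b x y * A y)/2 := by
      rw [Finset.sum_div]
      exact Finset.sum_congr rfl fun x _ => (Finset.sum_div _ _ _).symm
    rw [d1, d2, ← hD12]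
    ring
  -- bound on T
  have hT2 : (∑ x ∈ S, ∑ y ∈ S, ((1/2) * (b x y * sfn x y) - b x y) * min (A x) (A y))
      + ∑ x ∈ S, B x * A x
      ≤ (Real.sqrt (p^2+1)/2) * (∑ x ∈ S, ∑ y ∈ S, b x y * dfn x y * Mfn x y)
        + Real.sqrt (p^2+1) * U := by
    have hBsum : ∑ x ∈ S, B x * A x
        = (∑ x ∈ S, ∑ y ∈ S, b x y * A x)
          + ∑ x ∈ S, (∑' (y : ↑((↑S : Set X)ᶜ)), b x ↑y) * A x := by
      rw [← Finset.sum_add_distrib]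
      apply Finset.sum_congr rfl; intro x _
      rw [hBsplit x, add_mul, Finset.sum_mul]
    rw [hBsum]
    have hmain : (∑ x ∈ S, ∑ y ∈ S, ((1/2) * (b x y * sfn x y) - b x y) * min (A x) (A y))
        + (∑ x ∈ S, ∑ y ∈ S, b x y * A x)
        ≤ (Real.sqrt (p^2+1)/2) * (∑ x ∈ S, ∑ y ∈ S, b x y * dfn x y * Mfn x y) := by
      rw [← hhalfid]
      rw [Finset.mul_sum]
      have hcomb : ∀ x, (∑ y ∈ S, ((1/2) * (b x y * sfn x y) - b x y) * min (A x) (A y))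
          + (∑ y ∈ S, b x y * ((A x + A y)/2))
          ≤ ∑ y ∈ S, (Real.sqrt (p^2+1)/2) * (b x y * dfn x y * Mfn x y) := fun x => by
        rw [← Finset.sum_add_distrib]
        exact Finset.sum_le_sum fun y _ => hpair x y
      calc (∑ x ∈ S, ∑ y ∈ S, ((1/2) * (b x y * sfn x y) - b x y) * min (A x) (A y))
          + (∑ x ∈ S, ∑ y ∈ S, b x y * ((A x + A y)/2))
          = ∑ x ∈ S, ((∑ y ∈ S, ((1/2) * (b x y * sfn x y) - b x y) * min (A x) (A y))
              + ∑ y ∈ S, b x y * ((A x + A y)/2)) := by rw [Finset.sum_add_distrib]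
        _ ≤ ∑ x ∈ S, ∑ y ∈ S, (Real.sqrt (p^2+1)/2) * (b x y * dfn x y * Mfn x y) := by
            exact Finset.sum_le_sum fun x _ => hcomb x
        _ = ∑ x ∈ S, (Real.sqrt (p^2+1)/2) * ∑ y ∈ S, (b x y * dfn x y * Mfn x y) := by
            exact Finset.sum_congr rfl fun x _ => (Finset.mul_sum _ _ _).symm
    have hU2 : (∑ x ∈ S, (∑' (y : ↑((↑S : Set X)ᶜ)), b x ↑y) * A x)
        ≤ Real.sqrt (p^2+1) * U := by
      rw [hUdef, Finset.mul_sum]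
      exact Finset.sum_le_sum fun x _ => hcomplx x
    linarith [hmain, hU2]
  -- lower bound for the RHS tsum
  have hRx : ∀ x, R x = (∑ y ∈ S, b x y * dfn x y * Mfn x y)
      + ∑' (y : ↑((↑S : Set X)ᶜ)), (b x ↑y * dfn x ↑y * Mfn x ↑y) := fun x => by
    simp only [hRdef]
    exact (Summable.sum_add_tsum_compl (s := S) (hrowsum x)).symm
  have hUswap : (∑' (x : ↑((↑S : Set X)ᶜ)), ∑ y ∈ S, b ↑x y * dfn ↑x y * Mfn ↑x y) = U := by
    refine Eq.trans (Summable.tsum_finsetSum (fun y _ => ((hcolsum y).subtype _))) ?_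
    rw [hUdef]
    apply Finset.sum_congr rfl
    intro y _
    apply tsum_congr
    intro x
    rw [hbsym, hdsym, hMsym]
  have hcompl_ge : U ≤ ∑' (x : ↑((↑S : Set X)ᶜ)), R ↑x := by
    rw [← hUswap]
    apply Summable.tsum_le_tsum
    · intro x
      exact Summable.sum_le_tsum S (fun y _ => hterm0 _ _) (hrowsum ↑x)
    · have : Summable (fun x : ↥((↑S : Set X)ᶜ) => ∑ y ∈ S, b ↑x y * dfn ↑x y * Mfn ↑x y) := by
        apply summable_sum
        intro y _
        exact (hcolsum y).subtype _
      exact this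
    · exact hRS.subtype _
  have htotal : (∑' x, R x) = (∑ x ∈ S, R x) + ∑' (x : ↑((↑S : Set X)ᶜ)), R ↑x :=
    (Summable.sum_add_tsum_compl (s := S) hRS).symm
  have hsumSRx : ∑ x ∈ S, R x = (∑ x ∈ S, ∑ y ∈ S, b x y * dfn x y * Mfn x y) + U := by
    rw [hUdef, ← Finset.sum_add_distrib]
    exact Finset.sum_congr rfl fun x _ => hRx x
  have hRHS_ge : (∑ x ∈ S, ∑ y ∈ S, b x y * dfn x y * Mfn x y) + 2 * U ≤ ∑' x, R x := by
    rw [htotal, hsumSRx]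
    linarith [hcompl_ge]
  -- final assembly
  have hgoalR : (∑' (x : X), ∑' (y : X),
      b x y * ‖f x - Complex.exp ((θ x y : ℂ) * Complex.I) * f y‖ *
        ((‖f x‖ ^ p + ‖f y‖ ^ p) / 2) ^ ((p - 1) / p)) = ∑' x, R x := rfl
  calc (∫ t in Set.Ioi (0 : ℝ),
        (frust b θ 1 (S.filter (fun x => t < ‖f x‖ ^ p)) +
          (1 / 2) * bBoundary b (S.filter (fun x => t < ‖f x‖ ^ p))))
      ≤ ∫ t in Set.Ioi (0:ℝ), h t := hLHS_le
    _ = (∑ x ∈ S, ∑ y ∈ S, ((1/2) * (b x y * sfn x y) - b x y) * min (A x) (A y))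
        + ∑ x ∈ S, B x * A x := hIh
    _ ≤ (Real.sqrt (p^2+1)/2) * (∑ x ∈ S, ∑ y ∈ S, b x y * dfn x y * Mfn x y)
        + Real.sqrt (p^2+1) * U := hT2
    _ = (Real.sqrt (p^2+1)/2) *
        ((∑ x ∈ S, ∑ y ∈ S, b x y * dfn x y * Mfn x y) + 2 * U) := by ring
    _ ≤ (Real.sqrt (p^2+1)/2) * (∑' x, R x) := by
        apply mul_le_mul_of_nonneg_left hRHS_ge (by positivity)
    _ = (Real.sqrt (p ^ 2 + 1) / 2) *
        ∑' (x : X), ∑' (y : X),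
          b x y * ‖f x - Complex.exp ((θ x y : ℂ) * Complex.I) * f y‖ *
            ((‖f x‖ ^ p + ‖f y‖ ^ p) / 2) ^ ((p - 1) / p) := by rw [hgoalR]
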